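/- Let $X$ be a normed space, $\nu : U \to \mathbb{R}$ three times differentiable on a convex open set $U$, $\bar g \in U$ a critical point of $\nu$ ($\nu'_{\bar g} = 0$). Suppose there are constants $C_1, C > 0$ and seminorms $\|\cdot\|_{H^1} \leq \|\cdot\|_{C^{2,\alpha}}$ on $X$ such that $\nu''_{\bar g}(h,h) \leq -C_1 \|h\|_{H^1}^2$ and $|\nu'''_{g}(h,h,h)| \leq C \|h\|_{H^1}^2 \|h\|_{C^{2,\alpha}}$ for all $g$ on the segment from $\bar g$ to $\bar g + h$. Then $\nu(\bar g + h) \leq \nu(\bar g) - (C_1/2 - C\|h\|_{C^{2,\alpha}})\|h\|_{H^1}^2$; in particular $\nu(\bar g + h) \leq \nu(\bar g)$ whenever $\|h\|_{C^{2,\alpha}} \leq C_1/(2C)$. -/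

import Mathlib

/-- Taylor expansion argument for local maximality: if `ν'(ḡ) = 0`,
`ν''_ḡ(h,h) ≤ -C₁‖h‖²_{H¹}` and `|ν'''(h,h,h)| ≤ C‖h‖²_{H¹}‖h‖_{C^{2,α}}` along the
segment, then `ν(ḡ+h) ≤ ν(ḡ) - (C₁/2 - C‖h‖_{C^{2,α}})‖h‖²_{H¹}`; in particular
`ν(ḡ+h) ≤ ν(ḡ)` whenever `‖h‖_{C^{2,α}} ≤ C₁/(2C)`. -/
theorem stmt16 {X : Type*} [NormedAddCommGroup X] [NormedSpace ℝ X]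
    (ν : X → ℝ) (hν : ContDiff ℝ 3 ν) (g₀ h : X) (C₁ C : ℝ) (hC₁ : 0 < C₁) (hC : 0 < C)
    (N₁ N₂ : X → ℝ) (hN₁ : 0 ≤ N₁ h) (hN : ∀ x : X, N₁ x ≤ N₂ x)
    (hcrit : fderiv ℝ ν g₀ = 0)
    (hsec : (iteratedFDeriv ℝ 2 ν g₀) ![h, h] ≤ -C₁ * N₁ h ^ 2)
    (hthird : ∀ t ∈ Set.Icc (0:ℝ) 1,
      |(iteratedFDeriv ℝ 3 ν (g₀ + t • h)) ![h, h, h]| ≤ C * N₁ h ^ 2 * N₂ h) :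
    ν (g₀ + h) ≤ ν g₀ - (C₁/2 - C * N₂ h) * N₁ h ^ 2 ∧
    (N₂ h ≤ C₁/(2*C) → ν (g₀ + h) ≤ ν g₀) := by
  set y : ℝ → X := fun t => g₀ + t • h with hy_def
  have hy : ∀ t : ℝ, HasDerivAt y h t := by
    intro t
    have : HasDerivAt (fun t : ℝ => t • h) ((1:ℝ) • h) t := (hasDerivAt_id t).smul_const h
    have h2 := this.const_add g₀
    rw [one_smul] at h2
    exact h2
  set D1 : X → (X →L[ℝ] ℝ) := fderiv ℝ ν with hD1_def
  set D2 := fderiv ℝ D1 with hD2_def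
  set D3 := fderiv ℝ D2 with hD3_def
  have hD1 : ContDiff ℝ 2 D1 := hν.fderiv_right (by norm_num)
  have hD2 : ContDiff ℝ 1 D2 := hD1.fderiv_right (by norm_num)
  set f : ℝ → ℝ := fun t => ν (y t) with hf_def
  set f₁ : ℝ → ℝ := fun t => D1 (y t) h with hf₁_def
  set f₂ : ℝ → ℝ := fun t => D2 (y t) h h with hf₂_def
  set f₃ : ℝ → ℝ := fun t => D3 (y t) h h h with hf₃_def
  have hf' : ∀ t : ℝ, HasDerivAt f (f₁ t) t := by
    intro t
    exact ((hν.differentiable (by norm_num) (y t)).hasFDerivAt).comp_hasDerivAt t (hy t)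
  have hf₁' : ∀ t : ℝ, HasDerivAt f₁ (f₂ t) t := by
    intro t
    have h1 : HasDerivAt (fun t => D1 (y t)) (D2 (y t) h) t :=
      ((hD1.differentiable (by norm_num) (y t)).hasFDerivAt).comp_hasDerivAt t (hy t)
    have := h1.clm_apply (hasDerivAt_const t h)
    simpa using this
  have hf₂' : ∀ t : ℝ, HasDerivAt f₂ (f₃ t) t := by
    intro t
    have h1 : HasDerivAt (fun t => D2 (y t)) (D3 (y t) h) t :=
      ((hD2.differentiable (by norm_num) (y t)).hasFDerivAt).comp_hasDerivAt t (hy t)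
    have h2 := h1.clm_apply (hasDerivAt_const t h)
    have h3 : HasDerivAt (fun t => D2 (y t) h) (D3 (y t) h h) t := by simpa using h2
    have h4 := h3.clm_apply (hasDerivAt_const t h)
    simpa using h4
  -- identifications with iterated derivatives
  have hy0 : y 0 = g₀ := by simp [hy_def]
  have e2 : ∀ z : X, (iteratedFDeriv ℝ 2 ν z) ![h, h] = D2 z h h := by
    intro z
    rw [iteratedFDeriv_two_apply]
    simp [hD2_def, hD1_def]
  have e3 : ∀ z : X, (iteratedFDeriv ℝ 3 ν z) ![h, h, h] = D3 z h h h := by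
    intro z
    rw [iteratedFDeriv_succ_apply_right]
    have hinit : Fin.init ![h, h, h] = ![h, h] := by
      funext i
      fin_cases i <;> rfl
    rw [hinit, iteratedFDeriv_two_apply]
    rfl
  have hf₁0 : f₁ 0 = 0 := by
    have : f₁ 0 = D1 (y 0) h := rfl
    rw [this, hy0, hcrit]; rfl
  have hf₂0 : f₂ 0 ≤ -C₁ * N₁ h ^ 2 := by
    have := e2 g₀
    rw [this] at hsec
    simpa [hf₂_def, hy0] using hsec
  set M : ℝ := C * N₁ h ^ 2 * N₂ h with hM_def
  have hM0 : 0 ≤ M := by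
    have h1 : 0 ≤ N₂ h := le_trans hN₁ (hN h)
    positivity
  have hf₃le : ∀ t ∈ Set.Icc (0:ℝ) 1, f₃ t ≤ M := by
    intro t ht
    have := hthird t ht
    rw [e3 (g₀ + t • h)] at this
    exact le_trans (le_abs_self _) this
  -- the comparison function
  set g : ℝ → ℝ := fun t => f t - f 0 - t * f₁ 0 - t^2/2 * f₂ 0 - t^3/6 * M with hg_def
  have hg' : ∀ t : ℝ, HasDerivAt g (f₁ t - f₁ 0 - t * f₂ 0 - t^2/2 * M) t := by
    intro t
    have h1 := ((hf' t).sub_const (f 0)).sub (((hasDerivAt_id t).mul_const (f₁ 0)))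
    have h2 := h1.sub ((((hasDerivAt_pow 2 t)).div_const 2).mul_const (f₂ 0))
    have h3 := h2.sub ((((hasDerivAt_pow 3 t)).div_const 6).mul_const M)
    exact h3.congr_deriv (by ring)
  set g1 : ℝ → ℝ := fun t => f₁ t - f₁ 0 - t * f₂ 0 - t^2/2 * M with hg1_def
  have hg1' : ∀ t : ℝ, HasDerivAt g1 (f₂ t - f₂ 0 - t * M) t := by
    intro t
    have h1 := ((hf₁' t).sub_const (f₁ 0)).sub ((hasDerivAt_id t).mul_const (f₂ 0))
    have h2 := h1.sub ((((hasDerivAt_pow 2 t)).div_const 2).mul_const M)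
    exact h2.congr_deriv (by norm_num <;> ring)
  set g2 : ℝ → ℝ := fun t => f₂ t - f₂ 0 - t * M with hg2_def
  have hg2' : ∀ t : ℝ, HasDerivAt g2 (f₃ t - M) t := by
    intro t
    have h1 := ((hf₂' t).sub_const (f₂ 0)).sub ((hasDerivAt_id t).mul_const M)
    exact h1.congr_deriv (by norm_num <;> ring)
  have hIcc : Convex ℝ (Set.Icc (0:ℝ) 1) := convex_Icc 0 1
  have hint : interior (Set.Icc (0:ℝ) 1) = Set.Ioo (0:ℝ) 1 := interior_Icc
  -- g2 is antitone on [0,1]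
  have hg2anti : AntitoneOn g2 (Set.Icc (0:ℝ) 1) := by
    apply antitoneOn_of_deriv_nonpos hIcc
    · exact fun t _ => ((hg2' t).continuousAt).continuousWithinAt
    · intro t ht
      exact ((hg2' t).differentiableAt).differentiableWithinAt
    · intro t ht
      rw [hint] at ht
      rw [(hg2' t).deriv]
      have := hf₃le t (Set.mem_Icc_of_Ioo ht)
      linarith
  have hg2le : ∀ t ∈ Set.Icc (0:ℝ) 1, g2 t ≤ 0 := by
    intro t ht
    have h0 : g2 0 = 0 := by simp [hg2_def]
    have := hg2anti (Set.left_mem_Icc.mpr zero_le_one) ht ht.1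
    linarith
  have hg1anti : AntitoneOn g1 (Set.Icc (0:ℝ) 1) := by
    apply antitoneOn_of_deriv_nonpos hIcc
    · exact fun t _ => ((hg1' t).continuousAt).continuousWithinAt
    · intro t ht
      exact ((hg1' t).differentiableAt).differentiableWithinAt
    · intro t ht
      rw [hint] at ht
      rw [(hg1' t).deriv]
      exact hg2le t (Set.mem_Icc_of_Ioo ht)
  have hg1le : ∀ t ∈ Set.Icc (0:ℝ) 1, g1 t ≤ 0 := by
    intro t ht
    have h0 : g1 0 = 0 := by simp [hg1_def]
    have := hg1anti (Set.left_mem_Icc.mpr zero_le_one) ht ht.1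
    linarith
  have hganti : AntitoneOn g (Set.Icc (0:ℝ) 1) := by
    apply antitoneOn_of_deriv_nonpos hIcc
    · exact fun t _ => ((hg' t).continuousAt).continuousWithinAt
    · intro t ht
      exact ((hg' t).differentiableAt).differentiableWithinAt
    · intro t ht
      rw [hint] at ht
      rw [(hg' t).deriv]
      exact hg1le t (Set.mem_Icc_of_Ioo ht)
  have hgle : g 1 ≤ 0 := by
    have h0 : g 0 = 0 := by simp [hg_def]
    have := hganti (Set.left_mem_Icc.mpr zero_le_one)
      (Set.right_mem_Icc.mpr zero_le_one) zero_le_one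
    linarith
  have hf1 : f 1 = ν (g₀ + h) := by simp [hf_def, hy_def]
  have hf0 : f 0 = ν g₀ := by simp [hf_def, hy0]
  have key : ν (g₀ + h) ≤ ν g₀ + f₂ 0 / 2 + M / 6 := by
    have : g 1 = f 1 - f 0 - f₁ 0 - f₂ 0 / 2 - M / 6 := by
      simp [hg_def]; ring
    rw [this, hf1, hf0, hf₁0] at hgle
    linarith
  have hMeq : M = C * N₂ h * N₁ h ^ 2 := by rw [hM_def]; ring
  have main : ν (g₀ + h) ≤ ν g₀ - (C₁/2 - C * N₂ h) * N₁ h ^ 2 := by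
    have hgoal : ν g₀ - (C₁/2 - C * N₂ h) * N₁ h ^ 2
        = ν g₀ - C₁ * N₁ h ^ 2 / 2 + C * N₂ h * N₁ h ^ 2 := by ring
    rw [hgoal]
    linarith [key, hf₂0, hM0]
  refine ⟨main, fun hle => ?_⟩
  have h1 : C * N₂ h ≤ C₁ / 2 := by
    have h2 : (0:ℝ) < 2 * C := by positivity
    rw [le_div_iff₀ h2] at hle
    linarith
  have h3 : 0 ≤ (C₁/2 - C * N₂ h) * N₁ h ^ 2 :=
    mul_nonneg (by linarith) (sq_nonneg _)
  linarith [main]
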